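/- arXiv:0910.2439 — 6 statements merged into one kernel-verified Lean document; each statement's English description precedes it below -/
import Mathlib

section
/- Let α ∈ ℂ with Re α > 0 and Im α > 0. Then for every r > 0 the function r ↦ φ(α,r) is differentiable at r with derivative √(1 + α² sinh² r) / sinh r (principal square root). -/
/-- `w α r = √(1 + α² sinh² r)` (principal branch). -/
noncomputable def w (α : ℂ) (r : ℝ) : ℂ :=
  (1 + α ^ 2 * (Real.sinh r : ℂ) ^ 2) ^ (1 / 2 : ℂ)

/-- `φ(α,r) = α log((α cosh r + w)/√(α²−1)) + (1/2) log((cosh r − w)/(cosh r + w))`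
(principal branches). -/
noncomputable def phi (α : ℂ) (r : ℝ) : ℂ :=
  α * Complex.log ((α * (Real.cosh r : ℂ) + w α r) / ((α ^ 2 - 1) ^ (1 / 2 : ℂ))) +
    (1 / 2 : ℂ) * Complex.log (((Real.cosh r : ℂ) - w α r) / ((Real.cosh r : ℂ) + w α r))

open Complex in
lemma sqrt_first_quadrant {z : ℂ} (hz : 0 < z.im) :
    0 < (z ^ (1 / 2 : ℂ)).re ∧ 0 < (z ^ (1 / 2 : ℂ)).im := by
  have hz0 : z ≠ 0 := by
    intro h; rw [h] at hz; simp at hz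
  have harg0 : 0 < z.arg := by
    rcases lt_or_eq_of_le (Complex.arg_nonneg_iff.mpr hz.le) with h | h
    · exact h
    · exact absurd (Complex.arg_eq_zero_iff.mp h.symm).2 hz.ne'
  have hargpi : z.arg < Real.pi := Complex.arg_lt_pi_iff.mpr (Or.inr hz.ne')
  rw [Complex.cpow_def_of_ne_zero hz0]
  have him : (Complex.log z * (1 / 2 : ℂ)).im = z.arg / 2 := by
    simp [Complex.mul_im, Complex.log_im]; ring
  have h1 : 0 < z.arg / 2 := by linarith
  have h2 : z.arg / 2 < Real.pi / 2 := by linarith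
  have hpi := Real.pi_pos
  constructor
  · rw [Complex.exp_re, him]
    exact mul_pos (Real.exp_pos _) (Real.cos_pos_of_mem_Ioo ⟨by linarith, h2⟩)
  · rw [Complex.exp_im, him]
    exact mul_pos (Real.exp_pos _) (Real.sin_pos_of_pos_of_lt_pi h1 (by linarith))


/-- For `Re α > 0`, `Im α > 0`, the function `r ↦ φ(α,r)` is differentiable at each
`r > 0` with derivative `√(1 + α² sinh² r)/sinh r`. -/
theorem phi_hasDerivAt (α : ℂ) (hre : 0 < α.re) (him : 0 < α.im)
    (r : ℝ) (hr : 0 < r) :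
    HasDerivAt (fun t : ℝ => phi α t)
      ((1 + α ^ 2 * (Real.sinh r : ℂ) ^ 2) ^ (1 / 2 : ℂ) / (Real.sinh r : ℂ)) r := by
  have hsR : 0 < Real.sinh r := Real.sinh_pos_iff.mpr hr
  have hcR : 0 < Real.cosh r := Real.cosh_pos r
  set s : ℂ := (Real.sinh r : ℂ) with hs_def
  set c : ℂ := (Real.cosh r : ℂ) with hc_def
  have hs0 : s ≠ 0 := Complex.ofReal_ne_zero.mpr hsR.ne'
  have hcim : c.im = 0 := by rw [hc_def]; simp
  have hcre : c.re = Real.cosh r := by rw [hc_def]; simp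
  -- imaginary part of α^2
  have hα2im : 0 < (α ^ 2).im := by
    rw [sq, Complex.mul_im]; nlinarith
  -- z₀ = 1 + α² s²
  set z₀ : ℂ := 1 + α ^ 2 * s ^ 2 with hz₀_def
  have hz₀im : 0 < z₀.im := by
    have h1 : z₀ = 1 + ((Real.sinh r ^ 2 : ℝ) : ℂ) * α ^ 2 := by
      rw [hz₀_def, hs_def]; push_cast; ring
    rw [h1, Complex.add_im, Complex.one_im, Complex.im_ofReal_mul]
    positivity
  have hz₀0 : z₀ ≠ 0 := by intro h; rw [h] at hz₀im; simp at hz₀im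
  set W : ℂ := z₀ ^ (1 / 2 : ℂ) with hW_def
  obtain ⟨hWre, hWim⟩ := sqrt_first_quadrant hz₀im
  rw [← hW_def] at hWre hWim
  have hW0 : W ≠ 0 := by
    intro h; rw [h] at hWre; simp at hWre
  have hW2 : W ^ 2 = z₀ := by
    rw [hW_def, sq, ← Complex.cpow_add _ _ hz₀0]
    norm_num
  -- K = (α² - 1)^(1/2)
  set K : ℂ := (α ^ 2 - 1) ^ (1 / 2 : ℂ) with hK_def
  have hK1im : 0 < (α ^ 2 - 1).im := by simpa using hα2im
  obtain ⟨hKre, hKim⟩ := sqrt_first_quadrant hK1im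
  rw [← hK_def] at hKre hKim
  have hK0 : K ≠ 0 := by intro h; rw [h] at hKre; simp at hKre
  -- derivative of w
  have hsinhC : HasDerivAt (fun t : ℝ => ((Real.sinh t : ℝ) : ℂ)) c r :=
    (Real.hasDerivAt_sinh r).ofReal_comp
  have hcoshC : HasDerivAt (fun t : ℝ => ((Real.cosh t : ℝ) : ℂ)) s r :=
    (Real.hasDerivAt_cosh r).ofReal_comp
  have hf₁ : HasDerivAt (fun t : ℝ => 1 + α ^ 2 * ((Real.sinh t : ℝ) : ℂ) ^ 2)
      (α ^ 2 * (2 * s * c)) r := by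
    have h := ((hsinhC.mul hsinhC).const_mul (α ^ 2)).const_add 1
    have heq : (fun t : ℝ => 1 + α ^ 2 * ((Real.sinh t : ℝ) : ℂ) ^ 2)
        = fun t : ℝ => 1 + α ^ 2 * (((Real.sinh t : ℝ) : ℂ) * ((Real.sinh t : ℝ) : ℂ)) := by
      funext t; ring
    rw [heq]
    exact h.congr_deriv (by ring)
  have hz₀slit : z₀ ∈ Complex.slitPlane := Or.inr hz₀im.ne'
  have hWinv : z₀ ^ ((1 / 2 : ℂ) - 1) = 1 / W := by
    rw [Complex.cpow_sub _ _ hz₀0, Complex.cpow_one, ← hW_def, ← hW2, sq]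
    rw [div_mul_eq_div_div, div_self hW0]
  have hW' : HasDerivAt (fun t : ℝ => w α t) (α ^ 2 * s * c / W) r := by
    have h := (Complex.hasStrictDerivAt_cpow_const (c := (1/2 : ℂ))
        hz₀slit).hasDerivAt.comp r hf₁
    have heq : (1 / 2 : ℂ) * z₀ ^ ((1 / 2 : ℂ) - 1) * (α ^ 2 * (2 * s * c))
        = α ^ 2 * s * c / W := by
      rw [hWinv]; field_simp
    rw [← heq]
    exact h
  -- slit plane membership of quotient 1
  have hNim : 0 < (α * c + W).im := by
    have h1 : (α * c + W).im = Real.cosh r * α.im + W.im := by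
      rw [Complex.add_im, hc_def, mul_comm α, Complex.im_ofReal_mul]
    rw [h1]; positivity
  have hN0 : α * c + W ≠ 0 := by
    intro h; rw [h] at hNim; simp at hNim
  have hq1 : (α * c + W) / K ∈ Complex.slitPlane := by
    rw [Complex.mem_slitPlane_iff]
    by_cases h : ((α * c + W) / K).im = 0
    · left
      have hNK : ((α * c + W) / K) * K = α * c + W := div_mul_cancel₀ _ hK0
      have h2 : (α * c + W).im = ((α * c + W) / K).re * K.im := by
        conv_lhs => rw [← hNK]
        rw [Complex.mul_im, h, zero_mul, add_zero]
      nlinarith [h2 ▸ hNim]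
    · right; exact h
  -- c ± W
  have hCpW0 : c + W ≠ 0 := by
    intro h
    have h1 : W.im = 0 := by
      have := congrArg Complex.im h
      simpa [hc_def] using this
    exact hWim.ne' h1
  have hCmW0 : c - W ≠ 0 := by
    intro h
    have h1 : W.im = 0 := by
      have := congrArg Complex.im h
      simpa [hc_def] using this
    exact hWim.ne' h1
  have hq2 : (c - W) / (c + W) ∈ Complex.slitPlane := by
    rw [Complex.mem_slitPlane_iff]
    right
    intro h
    have hq : ((c - W) / (c + W)) * (c + W) = c - W := div_mul_cancel₀ _ hCpW0
    have him2 : -W.im = ((c - W) / (c + W)).re * W.im := by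
      have h1 := congrArg Complex.im hq
      rw [Complex.mul_im, h, Complex.add_im, hcim, zero_add,
        Complex.sub_im, hcim, zero_sub] at h1
      linarith [h1]
    have hqre : ((c - W) / (c + W)).re = -1 := by
      have h1 : ((c - W) / (c + W)).re * W.im = (-1 : ℝ) * W.im := by linarith
      exact mul_right_cancel₀ hWim.ne' h1
    have hre2 := congrArg Complex.re hq
    rw [Complex.mul_re, h, Complex.add_re, Complex.sub_re, hcre, hqre,
      Complex.add_im, hcim, zero_add] at hre2
    nlinarith [hre2]
  -- 1 - α² ≠ 0
  have h1α : (1 : ℂ) - α ^ 2 ≠ 0 := by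
    intro h
    have h1 := congrArg Complex.im h
    simp [Complex.sub_im] at h1
    exact hα2im.ne' h1
  -- cosh² = sinh² + 1 over ℂ
  have hc2 : c ^ 2 = s ^ 2 + 1 := by
    rw [hc_def, hs_def]
    norm_cast
    exact Real.cosh_sq r
  -- derivative of the first term
  have hT1 : HasDerivAt
      (fun t : ℝ => α * Complex.log ((α * ((Real.cosh t : ℝ) : ℂ) + w α t) / K))
      (α * (((α * s + α ^ 2 * s * c / W) / K) / ((α * c + W) / K))) r := by
    have hinner : HasDerivAt (fun t : ℝ => (α * ((Real.cosh t : ℝ) : ℂ) + w α t) / K)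
        ((α * s + α ^ 2 * s * c / W) / K) r :=
      ((hcoshC.const_mul α).add hW').div_const K
    exact (hinner.clog_real hq1).const_mul α
  -- derivative of the second term
  have hT2inner : HasDerivAt
      (fun t : ℝ => (((Real.cosh t : ℝ) : ℂ) - w α t) / (((Real.cosh t : ℝ) : ℂ) + w α t))
      (((s - α ^ 2 * s * c / W) * (c + W) - (c - W) * (s + α ^ 2 * s * c / W)) / (c + W) ^ 2)
      r := (hcoshC.sub hW').div (hcoshC.add hW') hCpW0
  have hT2 : HasDerivAt
      (fun t : ℝ => (1 / 2 : ℂ) *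
        Complex.log ((((Real.cosh t : ℝ) : ℂ) - w α t) / (((Real.cosh t : ℝ) : ℂ) + w α t)))
      ((1 / 2 : ℂ) *
        ((((s - α ^ 2 * s * c / W) * (c + W) - (c - W) * (s + α ^ 2 * s * c / W)) / (c + W) ^ 2)
          / ((c - W) / (c + W)))) r :=
    (hT2inner.clog_real hq2).const_mul (1 / 2 : ℂ)
  have hsum := hT1.add hT2
  have hfun : (fun t : ℝ => phi α t)
      = (fun t : ℝ => α * Complex.log ((α * ((Real.cosh t : ℝ) : ℂ) + w α t) / K) +
          (1 / 2 : ℂ) *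
            Complex.log ((((Real.cosh t : ℝ) : ℂ) - w α t) / (((Real.cosh t : ℝ) : ℂ) + w α t))) := by
    funext t
    simp only [phi, hK_def]
  rw [hfun]
  refine hsum.congr_deriv ?_
  -- now prove the value identity : W / s = E
  have hE1 : α * (((α * s + α ^ 2 * s * c / W) / K) / ((α * c + W) / K)) = α ^ 2 * s / W := by
    field_simp
    ring
  have hE2 : (1 / 2 : ℂ) *
      ((((s - α ^ 2 * s * c / W) * (c + W) - (c - W) * (s + α ^ 2 * s * c / W)) / (c + W) ^ 2)
        / ((c - W) / (c + W))) = (s * W ^ 2 - α ^ 2 * s * c ^ 2) / (W * ((c - W) * (c + W))) := by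
    field_simp [hW0, hCmW0, hCpW0]
    ring
  rw [hE1, hE2]
  have hnum : s * W ^ 2 - α ^ 2 * s * c ^ 2 = s * (1 - α ^ 2) := by
    rw [hW2, hz₀_def, hc2]; ring
  have hden : (c - W) * (c + W) = s ^ 2 * (1 - α ^ 2) := by
    have h := hW2
    rw [hz₀_def] at h
    linear_combination hc2 - h
  rw [hnum, hden]
  have hE2' : s * (1 - α ^ 2) / (W * (s ^ 2 * (1 - α ^ 2))) = 1 / (s * W) := by
    field_simp
  rw [hE2']
  have hfin : α ^ 2 * s / W + 1 / (s * W) = (α ^ 2 * s ^ 2 + 1) / (s * W) := by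
    field_simp
  rw [hfin]
  have hnum2 : (α ^ 2 * s ^ 2 + 1 : ℂ) = W ^ 2 := by rw [hW2, hz₀_def]; ring
  rw [hnum2, sq]
  rw [mul_comm s W, mul_div_mul_left _ _ hW0]
end

section
/- Let α ∈ ℂ with Re α > 0 and Im α > 0. Then the function r ↦ Re φ(α,r) is strictly increasing on (0,∞). -/
open Complex

lemma sqrt_quadrant {z : ℂ} (hz : 0 < z.im) :
    0 < (z ^ (1/2 : ℂ)).re ∧ 0 < (z ^ (1/2 : ℂ)).im := by
  have hz0 : z ≠ 0 := by intro h; simp [h] at hz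
  have hsin : 0 < Real.sin z.arg := by
    rw [Complex.sin_arg]
    exact div_pos hz (norm_pos_iff.mpr hz0)
  have hmem := Complex.arg_mem_Ioc z
  have harg1 : 0 < z.arg := by
    by_contra h
    push_neg at h
    have : Real.sin z.arg ≤ 0 :=
      Real.sin_nonpos_of_nonpos_of_neg_pi_le h (le_of_lt hmem.1)
    linarith
  have harg2 : z.arg < Real.pi := by
    rcases lt_or_eq_of_le hmem.2 with h | h
    · exact h
    · exfalso; rw [h] at hsin; simp at hsin
  rw [Complex.cpow_def_of_ne_zero hz0]
  have him : (Complex.log z * (1/2)).im = z.arg / 2 := by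
    simp [Complex.mul_im, Complex.log_im]
    ring
  constructor
  · rw [Complex.exp_re, him]
    have : 0 < Real.cos (z.arg / 2) :=
      Real.cos_pos_of_mem_Ioo ⟨by linarith [Real.pi_pos], by linarith⟩
    positivity
  · rw [Complex.exp_im, him]
    have : 0 < Real.sin (z.arg / 2) :=
      Real.sin_pos_of_pos_of_lt_pi (by linarith) (by linarith [Real.pi_pos])
    positivity

lemma im_sq_pos {α : ℂ} (hre : 0 < α.re) (him : 0 < α.im) : 0 < (α ^ 2).im := by
  simp only [pow_two, Complex.mul_im]
  nlinarith

lemma im_z (α : ℂ) (s : ℝ) : (1 + α ^ 2 * (s : ℂ) ^ 2).im = (α ^ 2).im * s ^ 2 := by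
  simp [← Complex.ofReal_pow]

set_option maxHeartbeats 1000000 in
lemma hasDerivAt_phi (α : ℂ) (hre : 0 < α.re) (him : 0 < α.im) {r : ℝ} (hr : 0 < r) :
    HasDerivAt (phi α) (w α r / (Real.sinh r : ℂ)) r := by
  set s : ℝ := Real.sinh r with hs_def
  set c : ℝ := Real.cosh r with hc_def
  have hs : 0 < s := Real.sinh_pos_iff.2 hr
  have hc : 0 < c := Real.cosh_pos r
  have hsC : ((s : ℂ)) ≠ 0 := by exact_mod_cast hs.ne'
  have him2 : 0 < (α ^ 2).im := im_sq_pos hre him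
  -- the inner function of the square root
  set z : ℂ := 1 + α ^ 2 * (s : ℂ) ^ 2 with hz_def
  have hz_im : 0 < z.im := by
    rw [hz_def, im_z α s]; positivity
  have hz0 : z ≠ 0 := by
    intro h; rw [h] at hz_im; simp at hz_im
  have hz_slit : z ∈ Complex.slitPlane := Complex.mem_slitPlane_iff.2 (Or.inr hz_im.ne')
  set W : ℂ := w α r with hW_def
  have hWz : W = z ^ (1/2 : ℂ) := rfl
  obtain ⟨hWre, hWim⟩ := sqrt_quadrant hz_im
  rw [← hWz] at hWre hWim
  have hW0 : W ≠ 0 := by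
    intro h; rw [h] at hWre; simp at hWre
  have hWW : W * W = z := by
    rw [hWz, ← Complex.cpow_add _ _ hz0]
    norm_num
  have hc2 : ((c : ℂ)) ^ 2 = (s : ℂ) ^ 2 + 1 := by
    have := Real.cosh_sq r
    rw [hc_def, hs_def]
    exact_mod_cast congrArg (Complex.ofReal ·) this
  -- derivatives of the coercions
  have hsinh : HasDerivAt (fun t : ℝ => ((Real.sinh t : ℝ) : ℂ)) (c : ℂ) r :=
    (Real.hasDerivAt_sinh r).ofReal_comp
  have hcosh : HasDerivAt (fun t : ℝ => ((Real.cosh t : ℝ) : ℂ)) (s : ℂ) r :=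
    (Real.hasDerivAt_cosh r).ofReal_comp
  -- derivative of z as a function of r
  have hu : HasDerivAt (fun t : ℝ => 1 + α ^ 2 * ((Real.sinh t : ℝ) : ℂ) ^ 2)
      (α ^ 2 * ((c : ℂ) * (s : ℂ) + (s : ℂ) * (c : ℂ))) r := by
    have h0 : HasDerivAt (fun t : ℝ => 1 + α ^ 2 * (((Real.sinh t : ℝ) : ℂ) * ((Real.sinh t : ℝ) : ℂ)))
        (α ^ 2 * ((c : ℂ) * (s : ℂ) + (s : ℂ) * (c : ℂ))) r :=
      ((hsinh.mul hsinh).const_mul (α ^ 2)).const_add 1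
    have hfe : (fun t : ℝ => 1 + α ^ 2 * (((Real.sinh t : ℝ) : ℂ) * ((Real.sinh t : ℝ) : ℂ)))
        = (fun t : ℝ => 1 + α ^ 2 * ((Real.sinh t : ℝ) : ℂ) ^ 2) := by
      funext t; rw [← pow_two]
    rwa [hfe] at h0
  -- derivative of W
  have hwA : HasDerivAt (fun t : ℝ => w α t)
      ((1/2 : ℂ) * z ^ ((1/2 : ℂ) - 1) * (α ^ 2 * ((c : ℂ) * (s : ℂ) + (s : ℂ) * (c : ℂ)))) r := by
    have := ((Complex.hasStrictDerivAt_cpow_const (c := (1/2 : ℂ))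
      hz_slit).hasDerivAt).comp r hu
    exact this
  set d : ℂ := α ^ 2 * (s : ℂ) * (c : ℂ) / W with hd_def
  have hderiv_eq : (1/2 : ℂ) * z ^ ((1/2 : ℂ) - 1) * (α ^ 2 * ((c : ℂ) * (s : ℂ) + (s : ℂ) * (c : ℂ)))
      = d := by
    have hinv : z ^ ((1/2 : ℂ) - 1) = W⁻¹ := by
      rw [show ((1/2 : ℂ) - 1) = -(1/2 : ℂ) by norm_num, Complex.cpow_neg, ← hWz]
    rw [hinv, hd_def]
    field_simp
    ring
  have hw' : HasDerivAt (fun t : ℝ => w α t) d r := hderiv_eq ▸ hwA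
  -- the constant k
  set k : ℂ := (α ^ 2 - 1) ^ (1/2 : ℂ) with hk_def
  have hk_im : 0 < (α ^ 2 - 1).im := by simpa using him2
  obtain ⟨hkre, hkim⟩ := sqrt_quadrant hk_im
  rw [← hk_def] at hkre hkim
  have hk0 : k ≠ 0 := by intro h; rw [h] at hkre; simp at hkre
  -- first log term
  have hA_re : 0 < (α * (c : ℂ) + W).re := by
    have : (α * (c : ℂ) + W).re = α.re * c + W.re := by
      simp [Complex.add_re, Complex.mul_re]
    rw [this]; positivity
  have hA_im : 0 < (α * (c : ℂ) + W).im := by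
    have : (α * (c : ℂ) + W).im = α.im * c + W.im := by
      simp [Complex.add_im, Complex.mul_im]
    rw [this]; positivity
  have hA0 : α * (c : ℂ) + W ≠ 0 := by
    intro h; rw [h] at hA_re; simp at hA_re
  have ha_re : 0 < ((α * (c : ℂ) + W) / k).re := by
    rw [Complex.div_re]
    have hN : 0 < Complex.normSq k := Complex.normSq_pos.2 hk0
    have h1 : 0 < (α * (c : ℂ) + W).re * k.re / Complex.normSq k := by positivity
    have h2 : 0 < (α * (c : ℂ) + W).im * k.im / Complex.normSq k := by positivity
    linarith
  have ha_slit : (α * (c : ℂ) + W) / k ∈ Complex.slitPlane :=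
    Complex.mem_slitPlane_iff.2 (Or.inl ha_re)
  have h1in : HasDerivAt (fun t : ℝ => (α * ((Real.cosh t : ℝ) : ℂ) + w α t) / k)
      ((α * (s : ℂ) + d) / k) r := ((hcosh.const_mul α).add hw').div_const k
  have hlog1 : HasDerivAt
      (fun t : ℝ => Complex.log ((α * ((Real.cosh t : ℝ) : ℂ) + w α t) / k))
      (((α * (s : ℂ) + d) / k) / ((α * (c : ℂ) + W) / k)) r :=
    h1in.clog_real ha_slit
  -- second log term
  have hden_re : 0 < ((c : ℂ) + W).re := by
    have : ((c : ℂ) + W).re = c + W.re := by simp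
    rw [this]; positivity
  have hden0 : (c : ℂ) + W ≠ 0 := by
    intro h; rw [h] at hden_re; simp at hden_re
  have hnum0 : (c : ℂ) - W ≠ 0 := by
    intro h
    have : ((c : ℂ) - W).im = 0 := by rw [h]; simp
    simp at this
    linarith
  have hq_im : (((c : ℂ) - W) / ((c : ℂ) + W)).im < 0 := by
    rw [Complex.div_im]
    have hN : 0 < Complex.normSq ((c : ℂ) + W) := Complex.normSq_pos.2 hden0
    rw [div_sub_div_same]
    apply div_neg_of_neg_of_pos _ hN
    have h1 : ((c : ℂ) - W).im = -W.im := by simp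
    have h2 : ((c : ℂ) + W).re = c + W.re := by simp
    have h3 : ((c : ℂ) - W).re = c - W.re := by simp
    have h4 : ((c : ℂ) + W).im = W.im := by simp
    rw [h1, h2, h3, h4]
    nlinarith
  have hq_slit : ((c : ℂ) - W) / ((c : ℂ) + W) ∈ Complex.slitPlane :=
    Complex.mem_slitPlane_iff.2 (Or.inr hq_im.ne)
  have h2in : HasDerivAt (fun t : ℝ => (((Real.cosh t : ℝ) : ℂ) - w α t) / (((Real.cosh t : ℝ) : ℂ) + w α t))
      ((((s : ℂ) - d) * ((c : ℂ) + W) - ((c : ℂ) - W) * ((s : ℂ) + d)) / ((c : ℂ) + W) ^ 2) r :=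
    (hcosh.sub hw').div (hcosh.add hw') hden0
  have hlog2 : HasDerivAt
      (fun t : ℝ => Complex.log ((((Real.cosh t : ℝ) : ℂ) - w α t) / (((Real.cosh t : ℝ) : ℂ) + w α t)))
      (((((s : ℂ) - d) * ((c : ℂ) + W) - ((c : ℂ) - W) * ((s : ℂ) + d)) / ((c : ℂ) + W) ^ 2)
        / (((c : ℂ) - W) / ((c : ℂ) + W))) r :=
    h2in.clog_real hq_slit
  -- assemble
  have htot := (hlog1.const_mul α).add (hlog2.const_mul (1/2 : ℂ))
  have hphi_fun : (fun t : ℝ => α * Complex.log ((α * ((Real.cosh t : ℝ) : ℂ) + w α t) / k)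
      + (1/2 : ℂ) * Complex.log ((((Real.cosh t : ℝ) : ℂ) - w α t) / (((Real.cosh t : ℝ) : ℂ) + w α t)))
      = phi α := by
    funext t
    simp [phi, hk_def]
  simp only [Pi.add_def] at htot
  rw [hphi_fun] at htot
  -- now identify the derivative
  have hdW : d * W = α ^ 2 * (s : ℂ) * (c : ℂ) := by
    rw [hd_def]; field_simp
  have E1 : α * (((α * (s : ℂ) + d) / k) / ((α * (c : ℂ) + W) / k)) = α ^ 2 * (s : ℂ) / W := by
    rw [hd_def]
    field_simp
    ring
  have hsWd0 : (s : ℂ) * W - d * (c : ℂ) ≠ 0 := by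
    intro h
    have key : ((s : ℂ) * W - d * (c : ℂ)) * ((s : ℂ) * W) = ((c : ℂ) + W) * ((c : ℂ) - W) := by
      linear_combination ((s : ℂ) ^ 2 + 1) * hWW + (-((s : ℂ) * (c : ℂ))) * hdW
        + (-(1 : ℂ) - α ^ 2 * (s : ℂ) ^ 2) * hc2
    rw [h, zero_mul] at key
    exact mul_ne_zero hden0 hnum0 key.symm
  have key : ((s : ℂ) * W - d * (c : ℂ)) * ((s : ℂ) * W) = ((c : ℂ) + W) * ((c : ℂ) - W) := by
    linear_combination ((s : ℂ) ^ 2 + 1) * hWW + (-((s : ℂ) * (c : ℂ))) * hdW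
      + (-(1 : ℂ) - α ^ 2 * (s : ℂ) ^ 2) * hc2
  have E2 : (1/2 : ℂ) * (((((s : ℂ) - d) * ((c : ℂ) + W) - ((c : ℂ) - W) * ((s : ℂ) + d)) / ((c : ℂ) + W) ^ 2)
      / (((c : ℂ) - W) / ((c : ℂ) + W))) = 1 / ((s : ℂ) * W) := by
    have hNum : ((s : ℂ) - d) * ((c : ℂ) + W) - ((c : ℂ) - W) * ((s : ℂ) + d)
        = 2 * ((s : ℂ) * W - d * (c : ℂ)) := by ring
    rw [hNum]
    rw [div_div_div_eq]
    rw [eq_div_iff (mul_ne_zero hsC hW0)]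
    have hD : ((c : ℂ) + W) ^ 2 * ((c : ℂ) - W) ≠ 0 := mul_ne_zero (pow_ne_zero 2 hden0) hnum0
    rw [show (1/2 : ℂ) * (2 * ((s : ℂ) * W - d * (c : ℂ)) * ((c : ℂ) + W) / (((c : ℂ) + W) ^ 2 * ((c : ℂ) - W)))
        * ((s : ℂ) * W) = (((s : ℂ) * W - d * (c : ℂ)) * ((s : ℂ) * W)) * ((c : ℂ) + W)
          / (((c : ℂ) + W) ^ 2 * ((c : ℂ) - W)) by ring, key, div_eq_one_iff_eq hD]
    ring
  rw [E1, E2] at htot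
  have Efin : α ^ 2 * (s : ℂ) / W + 1 / ((s : ℂ) * W) = W / (s : ℂ) := by
    rw [div_add_div _ _ hW0 (mul_ne_zero hsC hW0), div_eq_div_iff
      (mul_ne_zero hW0 (mul_ne_zero hsC hW0)) hsC]
    linear_combination (-(s:ℂ) * W) * hWW
  rw [Efin] at htot
  exact htot

/-- For `Re α > 0`, `Im α > 0`, the function `r ↦ Re φ(α,r)` is strictly increasing
on `(0,∞)`. -/
theorem re_phi_strictMonoOn (α : ℂ) (hre : 0 < α.re) (him : 0 < α.im) :
    StrictMonoOn (fun r : ℝ => (phi α r).re) (Set.Ioi 0) := by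
  have key : ∀ x ∈ Set.Ioi (0:ℝ),
      HasDerivAt (fun r : ℝ => (phi α r).re) ((w α x).re / Real.sinh x) x := by
    intro x hx
    have hphi := hasDerivAt_phi α hre him (Set.mem_Ioi.1 hx)
    have := (Complex.reCLM.hasFDerivAt (x := phi α x)).comp_hasDerivAt x hphi
    have heq : (w α x / (Real.sinh x : ℂ)).re = (w α x).re / Real.sinh x := by
      rw [Complex.div_ofReal_re]
    rw [← heq]
    exact this
  have hwre : ∀ x ∈ Set.Ioi (0:ℝ), 0 < (w α x).re := by
    intro x hx
    have hz_im : 0 < (1 + α ^ 2 * ((Real.sinh x : ℝ) : ℂ) ^ 2).im := by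
      rw [im_z α (Real.sinh x)]
      have := im_sq_pos hre him
      have hs : 0 < Real.sinh x := Real.sinh_pos_iff.2 (Set.mem_Ioi.1 hx)
      positivity
    exact (sqrt_quadrant hz_im).1
  apply strictMonoOn_of_deriv_pos (convex_Ioi 0)
  · intro x hx
    exact ((key x hx).continuousAt).continuousWithinAt
  · intro x hx
    rw [interior_Ioi] at hx
    rw [(key x hx).deriv]
    have hs : 0 < Real.sinh x := Real.sinh_pos_iff.2 (Set.mem_Ioi.1 hx)
    exact div_pos (hwre x hx) hs
end

section
/- Fix α ∈ ℂ with Re α > 0 and Im α > 0. Then there exist constants C > 0 and δ > 0 such that |φ(α,r) − log(r/2) − p(α)| ≤ C r² for all 0 < r < δ. -/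
/-- `p(α) = (α/2) log((α+1)/(α−1)) + (1/2) log(1−α²)` (principal branches). -/
noncomputable def pfun (α : ℂ) : ℂ :=
  (α / 2) * Complex.log ((α + 1) / (α - 1)) + (1 / 2 : ℂ) * Complex.log (1 - α ^ 2)

open Complex

noncomputable def zeta (α : ℂ) : ℂ :=
  Complex.log (α + 1) - (1 / 2 : ℂ) * Complex.log (α ^ 2 - 1)

noncomputable def Fc (α : ℂ) (z : ℂ) : ℂ :=
  α * Complex.log ((α * Complex.cosh z + (1 + α ^ 2 * Complex.sinh z ^ 2) ^ (1 / 2 : ℂ)) /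
      ((α ^ 2 - 1) ^ (1 / 2 : ℂ))) +
  (1 / 2 : ℂ) * Complex.log ((1 - α ^ 2) /
      (Complex.cosh z + (1 + α ^ 2 * Complex.sinh z ^ 2) ^ (1 / 2 : ℂ)) ^ 2) +
  (Real.log 2 : ℂ) - pfun α

theorem zeta_im (α : ℂ) (hre : 0 < α.re) (him : 0 < α.im) :
    |(zeta α).im| < Real.pi / 2 := by
  have hπ := Real.pi_pos
  have h1 : 0 ≤ (Complex.log (α + 1)).im := by
    rw [Complex.log_im, Complex.arg_nonneg_iff]
    simp; positivity
  have h2 : |(Complex.log (α + 1)).im| < Real.pi / 2 := by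
    rw [Complex.log_im]
    rw [Complex.abs_arg_lt_pi_div_two_iff]
    left; simp; linarith
  have him2 : 0 < (α ^ 2 - 1).im := by simp [sq, Complex.mul_im]; positivity
  have h3 : 0 < (Complex.log (α ^ 2 - 1)).im := by
    rw [Complex.log_im]
    rcases lt_or_eq_of_le (Complex.arg_nonneg_iff.2 him2.le) with h | h
    · exact h
    · exfalso
      have := Complex.arg_eq_zero_iff.1 h.symm
      linarith [this.2]
  have h4 : (Complex.log (α ^ 2 - 1)).im < Real.pi := by
    rw [Complex.log_im, Complex.arg_lt_pi_iff]; right; exact him2.ne'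
  have : (zeta α).im = (Complex.log (α + 1)).im - (1/2) * (Complex.log (α ^ 2 - 1)).im := by
    simp [zeta, Complex.sub_im, Complex.mul_im]
  rw [this, abs_lt]
  rw [abs_lt] at h2
  constructor <;> [linarith [h2.1]; linarith [h2.2]]

theorem exp_zeta (α : ℂ) (hre : 0 < α.re) (him : 0 < α.im) :
    (α + 1) / ((α ^ 2 - 1) ^ (1 / 2 : ℂ)) = Complex.exp (zeta α) := by
  have him2 : 0 < (α ^ 2 - 1).im := by simp [sq, Complex.mul_im]; positivity
  have hne2 : α ^ 2 - 1 ≠ 0 := by intro h; rw [h] at him2; simp at him2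
  have hne1 : α + 1 ≠ 0 := by
    intro h
    have : (α + 1).re = 0 := by rw [h]; simp
    simp at this; linarith
  rw [Complex.cpow_def_of_ne_zero hne2, zeta, Complex.exp_sub, Complex.exp_log hne1,
    mul_comm]

theorem exp_two_zeta (α : ℂ) (hre : 0 < α.re) (him : 0 < α.im) :
    (α + 1) / (α - 1) = Complex.exp (2 * zeta α) := by
  have him2 : 0 < (α ^ 2 - 1).im := by simp [sq, Complex.mul_im]; positivity
  have hne2 : α ^ 2 - 1 ≠ 0 := by intro h; rw [h] at him2; simp at him2
  have hne1 : α + 1 ≠ 0 := by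
    intro h; have : (α + 1).re = 0 := by rw [h]; simp
    simp at this; linarith
  have hnem : α - 1 ≠ 0 := by
    intro h; have : (α - 1).im = 0 := by rw [h]; simp
    simp at this; linarith
  have h2 : (2 : ℂ) * zeta α = (Complex.log (α + 1) + Complex.log (α + 1)) -
      Complex.log (α ^ 2 - 1) := by rw [zeta]; ring
  rw [h2, Complex.exp_sub, Complex.exp_add, Complex.exp_log hne1, Complex.exp_log hne2]
  field_simp
  ring

theorem log_exp_zeta (α : ℂ) (hre : 0 < α.re) (him : 0 < α.im) :
    Complex.log ((α + 1) / ((α ^ 2 - 1) ^ (1 / 2 : ℂ))) = zeta α := by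
  have h := zeta_im α hre him
  have hπ := Real.pi_pos
  rw [abs_lt] at h
  rw [exp_zeta α hre him, Complex.log_exp (by linarith) (by linarith)]

theorem log_X (α : ℂ) (hre : 0 < α.re) (him : 0 < α.im) :
    Complex.log ((α + 1) / (α - 1)) = 2 * zeta α := by
  have h := zeta_im α hre him
  have hπ := Real.pi_pos
  rw [abs_lt] at h
  have him2 : (2 * zeta α).im = 2 * (zeta α).im := by simp [Complex.mul_im]
  rw [exp_two_zeta α hre him, Complex.log_exp (by rw [him2]; linarith)
    (by rw [him2]; linarith)]

theorem Fc_zero (α : ℂ) (hre : 0 < α.re) (him : 0 < α.im) : Fc α 0 = 0 := by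
  have hone : ((1 : ℂ) + α ^ 2 * Complex.sinh 0 ^ 2) ^ (1 / 2 : ℂ) = 1 := by
    simp
  have hαne : 1 - α ^ 2 ≠ 0 := by
    intro h
    have : (1 - α ^ 2).im = 0 := by rw [h]; simp
    simp [sq, Complex.mul_im] at this
    nlinarith
  have hq : (1 - α ^ 2) / (Complex.cosh 0 + 1) ^ 2 = ((4⁻¹ : ℝ) : ℂ) * (1 - α ^ 2) := by
    rw [Complex.cosh_zero]
    push_cast
    ring
  have hlogq : Complex.log ((1 - α ^ 2) / (Complex.cosh 0 + 1) ^ 2)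
      = (Real.log 4⁻¹ : ℂ) + Complex.log (1 - α ^ 2) := by
    rw [hq, Complex.log_ofReal_mul (by norm_num) hαne]
  have hlog4 : Real.log (4⁻¹ : ℝ) = -(2 * Real.log 2) := by
    rw [Real.log_inv, show (4:ℝ) = 2 ^ 2 by norm_num, Real.log_pow]
    push_cast; ring
  have harg : α * Complex.cosh 0 + 1 = α + 1 := by rw [Complex.cosh_zero]; ring
  rw [Fc, hone, harg, hlogq, log_exp_zeta α hre him, pfun, log_X α hre him, hlog4]
  push_cast
  ring

theorem Fc_analytic (α : ℂ) (hre : 0 < α.re) (him : 0 < α.im) :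
    AnalyticAt ℂ (Fc α) 0 := by
  have him2 : 0 < (α ^ 2 - 1).im := by simp [sq, Complex.mul_im]; positivity
  have hne2 : α ^ 2 - 1 ≠ 0 := by intro h; rw [h] at him2; simp at him2
  have hsqne : (α ^ 2 - 1) ^ (1 / 2 : ℂ) ≠ 0 := by
    rw [Complex.cpow_def_of_ne_zero hne2]; exact Complex.exp_ne_zero _
  have hsinh : AnalyticAt ℂ Complex.sinh (0 : ℂ) := Complex.differentiable_sinh.analyticAt 0
  have hcosh : AnalyticAt ℂ Complex.cosh (0 : ℂ) := Complex.differentiable_cosh.analyticAt 0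
  have hinner : AnalyticAt ℂ (fun z => 1 + α ^ 2 * Complex.sinh z ^ 2) 0 :=
    analyticAt_const.add (analyticAt_const.mul (hsinh.pow 2))
  have hW : AnalyticAt ℂ (fun z => (1 + α ^ 2 * Complex.sinh z ^ 2) ^ (1 / 2 : ℂ)) 0 := by
    apply hinner.cpow analyticAt_const
    simp
  have hWval : ((1 : ℂ) + α ^ 2 * Complex.sinh 0 ^ 2) ^ (1 / 2 : ℂ) = 1 := by simp
  -- first log
  have hA : AnalyticAt ℂ
      (fun z => (α * Complex.cosh z + (1 + α ^ 2 * Complex.sinh z ^ 2) ^ (1 / 2 : ℂ)) /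
        ((α ^ 2 - 1) ^ (1 / 2 : ℂ))) 0 :=
    ((analyticAt_const.mul hcosh).add hW).div analyticAt_const hsqne
  have hAval : (α * Complex.cosh 0 + (1 + α ^ 2 * Complex.sinh 0 ^ 2) ^ (1 / 2 : ℂ)) /
      ((α ^ 2 - 1) ^ (1 / 2 : ℂ)) = Complex.exp (zeta α) := by
    rw [hWval, Complex.cosh_zero, mul_one, ← exp_zeta α hre him]
  have hmA : (α * Complex.cosh 0 + (1 + α ^ 2 * Complex.sinh 0 ^ 2) ^ (1 / 2 : ℂ)) /
      ((α ^ 2 - 1) ^ (1 / 2 : ℂ)) ∈ Complex.slitPlane := by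
    rw [hAval, Complex.mem_slitPlane_iff]
    left
    rw [Complex.exp_re]
    have h := zeta_im α hre him
    rw [abs_lt] at h
    have : 0 < Real.cos (zeta α).im :=
      Real.cos_pos_of_mem_Ioo ⟨h.1, h.2⟩
    positivity
  have hlogA : AnalyticAt ℂ (fun z => Complex.log
      ((α * Complex.cosh z + (1 + α ^ 2 * Complex.sinh z ^ 2) ^ (1 / 2 : ℂ)) /
        ((α ^ 2 - 1) ^ (1 / 2 : ℂ)))) 0 :=
    AnalyticAt.comp (f := fun z => (α * Complex.cosh z +
      (1 + α ^ 2 * Complex.sinh z ^ 2) ^ (1 / 2 : ℂ)) / ((α ^ 2 - 1) ^ (1 / 2 : ℂ)))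
      (analyticAt_clog hmA) hA
  -- second log
  have hQden : AnalyticAt ℂ
      (fun z => (Complex.cosh z + (1 + α ^ 2 * Complex.sinh z ^ 2) ^ (1 / 2 : ℂ)) ^ 2) 0 :=
    (hcosh.add hW).pow 2
  have hQdenval : (Complex.cosh 0 + (1 + α ^ 2 * Complex.sinh 0 ^ 2) ^ (1 / 2 : ℂ)) ^ 2 = 4 := by
    rw [hWval, Complex.cosh_zero]; norm_num
  have hQ : AnalyticAt ℂ (fun z => (1 - α ^ 2) /
      (Complex.cosh z + (1 + α ^ 2 * Complex.sinh z ^ 2) ^ (1 / 2 : ℂ)) ^ 2) 0 :=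
    analyticAt_const.div hQden (by rw [hQdenval]; norm_num)
  have hmQ : (1 - α ^ 2) /
      (Complex.cosh 0 + (1 + α ^ 2 * Complex.sinh 0 ^ 2) ^ (1 / 2 : ℂ)) ^ 2
      ∈ Complex.slitPlane := by
    rw [hQdenval, Complex.mem_slitPlane_iff]
    right
    simp [Complex.div_im, sq, Complex.mul_im]
    intro h
    nlinarith
  have hlogQ : AnalyticAt ℂ (fun z => Complex.log ((1 - α ^ 2) /
      (Complex.cosh z + (1 + α ^ 2 * Complex.sinh z ^ 2) ^ (1 / 2 : ℂ)) ^ 2)) 0 :=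
    AnalyticAt.comp (f := fun z => (1 - α ^ 2) /
      (Complex.cosh z + (1 + α ^ 2 * Complex.sinh z ^ 2) ^ (1 / 2 : ℂ)) ^ 2)
      (analyticAt_clog hmQ) hQ
  exact (((analyticAt_const.mul hlogA).add (analyticAt_const.mul hlogQ)).add
    analyticAt_const).sub analyticAt_const

theorem Fc_even (α : ℂ) : ∀ z, Fc α (-z) = Fc α z := by
  intro z
  simp [Fc, Complex.cosh_neg, Complex.sinh_neg, neg_sq]

theorem Fc_deriv (α : ℂ) (hre : 0 < α.re) (him : 0 < α.im) :
    deriv (Fc α) 0 = 0 := by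
  have hFa := Fc_analytic α hre him
  have hd : HasDerivAt (Fc α) (deriv (Fc α) 0) 0 := hFa.differentiableAt.hasDerivAt
  have hneg : HasDerivAt (fun z => Fc α (-z)) (-(deriv (Fc α) 0)) 0 := by
    have h0 : HasDerivAt (Fc α) (deriv (Fc α) 0) (-0 : ℂ) := by simpa using hd
    have h1 := h0.comp (0 : ℂ) (hasDerivAt_neg (0 : ℂ))
    exact h1.congr_deriv (by ring)
  have heq : (fun z => Fc α (-z)) = Fc α := funext (Fc_even α)
  rw [heq] at hneg
  have h := hd.unique hneg
  linear_combination h / 2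

theorem Fc_bound (α : ℂ) (hre : 0 < α.re) (him : 0 < α.im) :
    ∃ C > (0 : ℝ), ∃ ε > (0 : ℝ), ∀ z : ℂ, ‖z‖ < ε → ‖Fc α z‖ ≤ C * ‖z‖ ^ 2 := by
  obtain ⟨p, hp⟩ := Fc_analytic α hre him
  have hO := hp.isBigO_sub_partialSum_pow 2
  have hps : ∀ y : ℂ, p.partialSum 2 y = 0 := by
    intro y
    rw [FormalMultilinearSeries.partialSum]
    rw [Finset.sum_range_succ, Finset.sum_range_one]
    rw [p.apply_eq_pow_smul_coeff, p.apply_eq_pow_smul_coeff]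
    have h0 : p.coeff 0 = 0 := by
      have := hp.coeff_zero (fun _ => (1:ℂ))
      rw [Fc_zero α hre him] at this
      exact this
    have h1 : p.coeff 1 = 0 := by
      have := hp.deriv
      rw [Fc_deriv α hre him] at this
      exact this.symm
    rw [h0, h1]
    simp
  simp only [hps, zero_add, sub_zero] at hO
  rw [Asymptotics.isBigO_iff] at hO
  obtain ⟨C, hC⟩ := hO
  rw [Metric.eventually_nhds_iff] at hC
  obtain ⟨ε, hε, hball⟩ := hC
  refine ⟨max C 1, by positivity, ε, hε, fun z hz => ?_⟩
  have hd : dist z 0 < ε := by simpa [dist_eq_norm] using hz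
  have h2 : ‖Fc α z‖ ≤ C * ‖z‖ ^ 2 := by simpa using hball hd
  calc ‖Fc α z‖ ≤ C * ‖z‖ ^ 2 := h2
    _ ≤ max C 1 * ‖z‖ ^ 2 := by
        apply mul_le_mul_of_nonneg_right (le_max_left _ _) (by positivity)

theorem phi_decomp (α : ℂ) (hre : 0 < α.re) (him : 0 < α.im) (r : ℝ) (hr : 0 < r)
    (habs : ‖α ^ 2 * (Real.sinh r : ℂ) ^ 2‖ < 1) :
    phi α r - Complex.log ((r : ℂ) / 2) - pfun α
      = Fc α r + (Real.log (Real.sinh r / r) : ℂ) := by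
  rw [phi, Fc, ← Complex.ofReal_cosh, ← Complex.ofReal_sinh]
  simp only [w]
  set W : ℂ := (1 + α ^ 2 * (Real.sinh r : ℂ) ^ 2) ^ (1 / 2 : ℂ) with hWdef
  have hspos : 0 < Real.sinh r := by
    have := Real.sinh_lt_sinh.2 hr
    simpa using this
  have hcpos : 0 < Real.cosh r := Real.cosh_pos r
  have hu_ne : (1 : ℂ) + α ^ 2 * (Real.sinh r : ℂ) ^ 2 ≠ 0 := by
    intro h
    have he : α ^ 2 * (Real.sinh r : ℂ) ^ 2 = -1 := by linear_combination h
    rw [he] at habs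
    simp at habs
  have hw2 : W ^ 2 = 1 + α ^ 2 * (Real.sinh r : ℂ) ^ 2 := by
    rw [hWdef, sq, ← Complex.cpow_add _ _ hu_ne]
    norm_num
  have hre_u : 0 < ((1 : ℂ) + α ^ 2 * (Real.sinh r : ℂ) ^ 2).re := by
    have h1 : |(α ^ 2 * (Real.sinh r : ℂ) ^ 2).re| ≤ ‖α ^ 2 * (Real.sinh r : ℂ) ^ 2‖ :=
      Complex.abs_re_le_norm _
    rw [abs_le] at h1
    simp only [Complex.add_re, Complex.one_re]
    linarith
  have hargu : |Complex.arg (1 + α ^ 2 * (Real.sinh r : ℂ) ^ 2)| < Real.pi / 2 :=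
    Complex.abs_arg_lt_pi_div_two_iff.2 (Or.inl hre_u)
  have hrew : 0 < W.re := by
    rw [hWdef, Complex.cpow_def_of_ne_zero hu_ne, Complex.exp_re]
    have him' : (Complex.log (1 + α ^ 2 * (Real.sinh r : ℂ) ^ 2) * (1 / 2)).im
        = Complex.arg (1 + α ^ 2 * (Real.sinh r : ℂ) ^ 2) / 2 := by
      simp [Complex.mul_im, Complex.log_im]
      ring
    rw [him']
    have hπ := Real.pi_pos
    rw [abs_lt] at hargu
    have hcos : 0 < Real.cos (Complex.arg (1 + α ^ 2 * (Real.sinh r : ℂ) ^ 2) / 2) :=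
      Real.cos_pos_of_mem_Ioo ⟨by linarith, by linarith⟩
    positivity
  have hcw_re : 0 < ((Real.cosh r : ℂ) + W).re := by
    simp only [Complex.add_re, Complex.ofReal_re]
    linarith
  have hcw : (Real.cosh r : ℂ) + W ≠ 0 := by
    intro h
    rw [h] at hcw_re
    simp at hcw_re
  have h1ne : (1 : ℂ) - α ^ 2 ≠ 0 := by
    intro h
    have : ((1 : ℂ) - α ^ 2).im = 0 := by rw [h]; simp
    simp [sq, Complex.mul_im] at this
    nlinarith
  have hQne : (1 - α ^ 2) / ((Real.cosh r : ℂ) + W) ^ 2 ≠ 0 :=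
    div_ne_zero h1ne (pow_ne_zero 2 hcw)
  have hcs : ((Real.cosh r : ℂ)) ^ 2 = ((Real.sinh r : ℂ)) ^ 2 + 1 := by
    have := Real.cosh_sq r
    exact_mod_cast congrArg (fun x : ℝ => (x : ℂ)) this
  have key : ((Real.cosh r : ℂ) - W) * ((Real.cosh r : ℂ) + W)
      = ((Real.sinh r : ℂ)) ^ 2 * (1 - α ^ 2) := by
    linear_combination hcs - hw2
  have hfrac : ((Real.cosh r : ℂ) - W) / ((Real.cosh r : ℂ) + W)
      = ((Real.sinh r ^ 2 : ℝ) : ℂ) * ((1 - α ^ 2) / ((Real.cosh r : ℂ) + W) ^ 2) := by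
    rw [show ((Real.sinh r ^ 2 : ℝ) : ℂ) = ((Real.sinh r : ℂ)) ^ 2 by norm_cast,
      ← mul_div_assoc, div_eq_div_iff hcw (pow_ne_zero 2 hcw)]
    linear_combination ((Real.cosh r : ℂ) + W) * key
  have hlogfrac : Complex.log (((Real.cosh r : ℂ) - W) / ((Real.cosh r : ℂ) + W))
      = (Real.log (Real.sinh r ^ 2) : ℂ)
        + Complex.log ((1 - α ^ 2) / ((Real.cosh r : ℂ) + W) ^ 2) := by
    rw [hfrac, Complex.log_ofReal_mul (by positivity) hQne]
  have hlogs2 : Real.log (Real.sinh r ^ 2) = 2 * Real.log (Real.sinh r) := by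
    rw [Real.log_pow]; push_cast; ring
  have hlogr2 : Complex.log ((r : ℂ) / 2) = ((Real.log r - Real.log 2 : ℝ) : ℂ) := by
    rw [show ((r : ℂ) / 2) = ((r / 2 : ℝ) : ℂ) by push_cast; ring,
      ← Complex.ofReal_log (by positivity), Real.log_div hr.ne' (by norm_num)]
  have hlogsr : Real.log (Real.sinh r / r) = Real.log (Real.sinh r) - Real.log r :=
    Real.log_div hspos.ne' hr.ne'
  rw [hlogfrac, hlogr2, hlogs2, hlogsr]
  simp only [Complex.ofReal_sub, Complex.ofReal_mul, Complex.ofReal_ofNat]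
  ring

theorem log_sinh_div_bound (r : ℝ) (hr : 0 < r) (hr1 : r < 1) :
    |Real.log (Real.sinh r / r)| ≤ r ^ 2 := by
  have hslt : r < Real.sinh r := Real.self_lt_sinh_iff.2 hr
  have hub : Real.sinh r ≤ r + r ^ 3 := by
    have h1 := Real.exp_bound (x := r) (by rw [abs_of_pos hr]; linarith) (by norm_num : 0 < 3)
    have h2 := Real.exp_bound (x := -r) (by rw [abs_neg, abs_of_pos hr]; linarith)
      (by norm_num : 0 < 3)
    simp [Finset.sum_range_succ, Nat.factorial, abs_of_pos hr] at h1 h2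
    rw [abs_le] at h1 h2
    rw [Real.sinh_eq]
    nlinarith [h1.1, h1.2, h2.1, h2.2, pow_pos hr 3]
  have hpos : 0 < Real.sinh r / r := by positivity
  have h1le : 1 ≤ Real.sinh r / r := (le_div_iff₀ hr).2 (by linarith)
  rw [_root_.abs_of_nonneg (Real.log_nonneg h1le)]
  have hlog := Real.log_le_sub_one_of_pos hpos
  have hfin : Real.sinh r / r - 1 ≤ r ^ 2 := by
    rw [div_sub_one hr.ne', div_le_iff₀ hr]
    nlinarith
  linarith


/-- As `r → 0`, `φ(α,r) = log(r/2) + p(α) + O(r²)`. -/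
theorem phi_asymptotic_zero (α : ℂ) (hre : 0 < α.re) (him : 0 < α.im) :
    ∃ C > (0 : ℝ), ∃ δ > (0 : ℝ), ∀ r : ℝ, 0 < r → r < δ →
      ‖phi α r - Complex.log ((r : ℂ) / 2) - pfun α‖ ≤ C * r ^ 2 := by
  obtain ⟨C, hC, ε, hε, hbound⟩ := Fc_bound α hre him
  set a := ‖α‖ with ha
  set t : ℝ := 1 / (1 + a ^ 2) with ht
  have hapos : 0 ≤ a := norm_nonneg α
  have htpos : 0 < t := by positivity
  have ht1 : t ≤ 1 := by
    rw [ht]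
    rw [div_le_one (by positivity)]
    nlinarith
  set δ₁ : ℝ := Real.arsinh t with hδ₁
  have hδ₁pos : 0 < δ₁ := Real.arsinh_pos_iff.2 htpos
  refine ⟨C + 1, by linarith, min (min δ₁ ε) 1, by positivity, fun r hr hrδ => ?_⟩
  have hrδ₁ : r < δ₁ := lt_of_lt_of_le hrδ (le_trans (min_le_left _ _) (min_le_left _ _))
  have hrε : r < ε := lt_of_lt_of_le hrδ (le_trans (min_le_left _ _) (min_le_right _ _))
  have hr1 : r < 1 := lt_of_lt_of_le hrδ (min_le_right _ _)
  have hspos : 0 < Real.sinh r := by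
    have := Real.sinh_lt_sinh.2 hr
    simpa using this
  have hst : Real.sinh r < t := by
    have := Real.sinh_lt_sinh.2 hrδ₁
    rwa [hδ₁, Real.sinh_arsinh] at this
  have habs : ‖α ^ 2 * (Real.sinh r : ℂ) ^ 2‖ < 1 := by
    rw [norm_mul, norm_pow, norm_pow, Complex.norm_real, Real.norm_eq_abs, abs_of_pos hspos, ← ha]
    have h1 : Real.sinh r ^ 2 < t ^ 2 := by nlinarith
    have h2 : a ^ 2 * t ^ 2 ≤ a ^ 2 * t :=
      mul_le_mul_of_nonneg_left (by nlinarith) (sq_nonneg a)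
    have h3 : a ^ 2 * t < 1 := by
      rw [ht, mul_one_div, div_lt_one (by positivity)]
      linarith
    nlinarith [sq_nonneg a]
  have hid := phi_decomp α hre him r hr habs
  rw [hid]
  have hnr : ‖(r : ℂ)‖ = r := by
    rw [Complex.norm_real, Real.norm_eq_abs, abs_of_pos hr]
  have hFb : ‖Fc α (r : ℂ)‖ ≤ C * r ^ 2 := by
    have := hbound (r : ℂ) (by rw [hnr]; exact hrε)
    rwa [hnr] at this
  have hlog := log_sinh_div_bound r hr hr1
  calc ‖Fc α ↑r + ((Real.log (Real.sinh r / r) : ℝ) : ℂ)‖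
      ≤ ‖Fc α ↑r‖ + ‖((Real.log (Real.sinh r / r) : ℝ) : ℂ)‖ :=
        norm_add_le _ _
    _ ≤ C * r ^ 2 + r ^ 2 := by
        have h1 : ‖Fc α ↑r‖ = ‖Fc α (r : ℂ)‖ := rfl
        have h2 : ‖((Real.log (Real.sinh r / r) : ℝ) : ℂ)‖
            = |Real.log (Real.sinh r / r)| := by rw [Complex.norm_real, Real.norm_eq_abs]
        rw [h1, h2]
        exact add_le_add hFb hlog
    _ = (C + 1) * r ^ 2 := by ring
end

section
/- For every α ∈ ℂ with Re α > 0 and Im α > 0 and every r > 0, one has H(α,r) = Re[ 2φ(α,r) − p(α) − q(α) + α·log α − (α−1)·log(α−1) ]. -/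
open Complex Real Set

lemma arg_pos_of_im_pos {z : ℂ} (h : 0 < z.im) : 0 < z.arg := by
  refine lt_of_le_of_ne (Complex.arg_nonneg_iff.2 h.le) ?_
  intro he
  rw [eq_comm, Complex.arg_eq_zero_iff] at he
  exact absurd he.2 h.ne'

lemma arg_lt_pi_of_im_pos {z : ℂ} (h : 0 < z.im) : z.arg < π :=
  Complex.arg_lt_pi_iff.2 (Or.inr h.ne')

lemma im_pos_of_arg {z : ℂ} (h1 : 0 < z.arg) (h2 : z.arg < π) : 0 < z.im := by
  have hs : 0 < Real.sin z.arg := Real.sin_pos_of_pos_of_lt_pi h1 h2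
  rw [Complex.sin_arg] at hs
  rcases div_pos_iff.mp hs with ⟨h, _⟩ | ⟨_, h⟩
  · exact h
  · exact absurd h (not_lt.2 (norm_nonneg z))

lemma log_div' {x y : ℂ} (hx : x ≠ 0) (hy : y ≠ 0)
    (h : x.arg - y.arg ∈ Set.Ioc (-π) π) :
    Complex.log (x / y) = Complex.log x - Complex.log y := by
  have harg : (x / y).arg = x.arg - y.arg := by
    rw [← Complex.arg_coe_angle_toReal_eq_arg, Complex.arg_div_coe_angle hx hy,
      ← Real.Angle.coe_sub, Real.Angle.toReal_coe_eq_self_iff_mem_Ioc]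
    exact h
  apply Complex.ext
  · simp [Complex.log_re, map_div₀,
      Real.log_div (norm_ne_zero_iff.mpr hx) (norm_ne_zero_iff.mpr hy)]
  · simp [Complex.log_im, harg]

/-- half-power principal branch: log of `z ^ (1/2)`. -/
lemma log_half_pow {z : ℂ} (h1 : 0 < z.arg) (h2 : z.arg < π) :
    Complex.log (z ^ (1 / 2 : ℂ)) = Complex.log z * (1 / 2 : ℂ) := by
  have hz : z ≠ 0 := by
    intro h; rw [h] at h1; simp [Complex.arg_zero] at h1
  rw [Complex.cpow_def_of_ne_zero hz, Complex.log_exp]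
  · have : (Complex.log z * (1 / 2 : ℂ)).im = z.arg * (1 / 2) := by
      simp [Complex.mul_im, Complex.log_im]
    rw [this]; nlinarith [Real.pi_pos]
  · have : (Complex.log z * (1 / 2 : ℂ)).im = z.arg * (1 / 2) := by
      simp [Complex.mul_im, Complex.log_im]
    rw [this]; nlinarith [Real.pi_pos]

/-- `H(α,r) = Re[2α log(α cosh r + w) − α log(α²−1)]
  + log|(cosh r − w)/(cosh r + w)|` where `w = √(1 + α² sinh² r)`
(principal branches). -/
noncomputable def H (α : ℂ) (r : ℝ) : ℝ :=
  (2 * α * Complex.log (α * (Real.cosh r : ℂ) + w α r) -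
      α * Complex.log (α ^ 2 - 1)).re +
    Real.log ‖((Real.cosh r : ℂ) - w α r) / ((Real.cosh r : ℂ) + w α r)‖

/-- `q(α) = α log(α/√(α²−1)) + (1/2) log((1−α)/(1+α))` (principal branches). -/
noncomputable def qfun (α : ℂ) : ℂ :=
  α * Complex.log (α / ((α ^ 2 - 1) ^ (1 / 2 : ℂ))) +
    (1 / 2 : ℂ) * Complex.log ((1 - α) / (1 + α))

set_option maxHeartbeats 1000000 in
/-- `H(α,r) = Re[2φ(α,r) − p(α) − q(α) + α log α − (α−1) log(α−1)]`. -/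
theorem H_eq_phi_p_q (α : ℂ) (hre : 0 < α.re) (him : 0 < α.im) (r : ℝ) (hr : 0 < r) :
    H α r = (2 * phi α r - pfun α - qfun α + α * Complex.log α -
      (α - 1) * Complex.log (α - 1)).re := by
  have hpi := Real.pi_pos
  -- basic nonvanishing
  have hα : α ≠ 0 := by intro h; rw [h] at him; simp at him
  have him_m : (α - 1).im = α.im := by simp
  have him_p : (α + 1).im = α.im := by simp
  have hm_ne : α - 1 ≠ 0 := by
    intro h; have := congrArg Complex.im h; simp at this; exact him.ne' this
  have hp_ne : α + 1 ≠ 0 := by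
    intro h; have := congrArg Complex.im h; simp at this; exact him.ne' this
  have h1m_ne : (1 : ℂ) - α ≠ 0 := by
    intro h; have := congrArg Complex.im h; simp at this; exact him.ne' this
  -- α² - 1
  have him2 : 0 < (α ^ 2 - 1).im := by
    have : (α ^ 2 - 1).im = 2 * α.re * α.im := by
      simp [Complex.sub_im, pow_two, Complex.mul_im]; ring
    rw [this]; positivity
  have hne2 : α ^ 2 - 1 ≠ 0 := by
    intro h; rw [h] at him2; simp at him2
  have harg2_pos : 0 < (α ^ 2 - 1).arg := arg_pos_of_im_pos him2
  have harg2_lt : (α ^ 2 - 1).arg < π := arg_lt_pi_of_im_pos him2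
  -- s := (α²-1)^(1/2)
  set s : ℂ := (α ^ 2 - 1) ^ (1 / 2 : ℂ) with hs_def
  have hlogs : Complex.log s = Complex.log (α ^ 2 - 1) * (1 / 2 : ℂ) :=
    log_half_pow harg2_pos harg2_lt
  have hs_ne : s ≠ 0 := by
    rw [hs_def, Complex.cpow_def_of_ne_zero hne2]; exact Complex.exp_ne_zero _
  have hargs : s.arg = (α ^ 2 - 1).arg * (1 / 2) := by
    have := congrArg Complex.im hlogs
    simpa [Complex.log_im, Complex.mul_im] using this
  have hargs_pos : 0 < s.arg := by rw [hargs]; positivity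
  have hargs_lt : s.arg < π / 2 := by rw [hargs]; linarith
  -- z₀ := 1 + α² sinh² r  and  W
  set z₀ : ℂ := 1 + α ^ 2 * (Real.sinh r : ℂ) ^ 2 with hz0_def
  have hsinh : 0 < Real.sinh r := Real.sinh_pos_iff.2 hr
  have himz0 : 0 < z₀.im := by
    have : z₀.im = 2 * α.re * α.im * Real.sinh r ^ 2 := by
      simp [hz0_def, pow_two, Complex.add_im, Complex.mul_im, Complex.mul_re,
        Complex.sinh_ofReal_re, Complex.sinh_ofReal_im]
      exact Or.inl (by ring)
    rw [this]; positivity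
  have hargz0_pos : 0 < z₀.arg := arg_pos_of_im_pos himz0
  have hargz0_lt : z₀.arg < π := arg_lt_pi_of_im_pos himz0
  have hz0_ne : z₀ ≠ 0 := by intro h; rw [h] at himz0; simp at himz0
  have hW_def : w α r = z₀ ^ (1 / 2 : ℂ) := rfl
  have hlogW : Complex.log (w α r) = Complex.log z₀ * (1 / 2 : ℂ) := by
    rw [hW_def]; exact log_half_pow hargz0_pos hargz0_lt
  have hW_ne : w α r ≠ 0 := by
    rw [hW_def, Complex.cpow_def_of_ne_zero hz0_ne]; exact Complex.exp_ne_zero _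
  have hargW : (w α r).arg = z₀.arg * (1 / 2) := by
    have := congrArg Complex.im hlogW
    simpa [Complex.log_im, Complex.mul_im] using this
  have himW : 0 < (w α r).im := by
    refine im_pos_of_arg ?_ ?_
    · rw [hargW]; positivity
    · rw [hargW]; nlinarith
  -- A := α cosh r + W
  have hcosh : 0 < Real.cosh r := Real.cosh_pos r
  set A : ℂ := α * (Real.cosh r : ℂ) + w α r with hA_def
  have himA : 0 < A.im := by
    have : A.im = α.im * Real.cosh r + (w α r).im := by
      simp [hA_def, Complex.add_im, Complex.mul_im]
    rw [this]; positivity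
  have hA_ne : A ≠ 0 := by intro h; rw [h] at himA; simp at himA
  have hargA_pos : 0 < A.arg := arg_pos_of_im_pos himA
  have hargA_lt : A.arg < π := arg_lt_pi_of_im_pos himA
  -- arg of α, α±1
  have hargα_pos : 0 < α.arg := arg_pos_of_im_pos him
  have hargα_lt : α.arg < π / 2 := Complex.arg_lt_pi_div_two_iff.2 (Or.inl hre)
  have hargm_pos : 0 < (α - 1).arg := arg_pos_of_im_pos (by rw [him_m]; exact him)
  have hargm_lt : (α - 1).arg < π := arg_lt_pi_of_im_pos (by rw [him_m]; exact him)
  have hargp_pos : 0 < (α + 1).arg := arg_pos_of_im_pos (by rw [him_p]; exact him)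
  have hargp_lt : (α + 1).arg < π / 2 :=
    Complex.arg_lt_pi_div_two_iff.2 (Or.inl (by simp; linarith))
  -- (f) : log(α²-1) = log(α-1) + log(α+1)
  have hfac : α ^ 2 - 1 = (α - 1) * (α + 1) := by ring
  have hff : Complex.log (α ^ 2 - 1) = Complex.log (α - 1) + Complex.log (α + 1) := by
    rw [hfac]
    refine Complex.log_mul hm_ne hp_ne ?_
    have hang : (((α - 1) * (α + 1)).arg : Real.Angle) = ((α - 1).arg + (α + 1).arg : ℝ) := by
      rw [Complex.arg_mul_coe_angle hm_ne hp_ne, Real.Angle.coe_add]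
    rw [Real.Angle.angle_eq_iff_two_pi_dvd_sub] at hang
    obtain ⟨k, hk⟩ := hang
    have hgmem : 0 < ((α - 1) * (α + 1)).arg ∧ ((α - 1) * (α + 1)).arg < π := by
      rw [← hfac]; exact ⟨harg2_pos, harg2_lt⟩
    have hk0 : k = 0 := by
      have h1 : -2 * π < 2 * π * (k : ℝ) := by
        have := hgmem.1
        linarith [hargm_lt, hargp_lt]
      have h2 : 2 * π * (k : ℝ) < 2 * π := by
        have := hgmem.2
        linarith [hargm_pos, hargp_pos]
      by_contra hne
      rcases lt_or_gt_of_ne hne with h | h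
      · have hki : k ≤ -1 := by omega
        have hk' : (k : ℝ) ≤ -1 := by exact_mod_cast hki
        nlinarith [mul_nonneg (by linarith : (0:ℝ) ≤ -(k:ℝ) - 1) (by linarith : (0:ℝ) ≤ 2 * π)]
      · have hk' : (1 : ℝ) ≤ (k : ℝ) := by exact_mod_cast h
        nlinarith [mul_nonneg (by linarith : (0:ℝ) ≤ (k:ℝ) - 1) (by linarith : (0:ℝ) ≤ 2 * π)]
    constructor
    · subst hk0; push_cast at hk; nlinarith [hgmem.1]
    · subst hk0; push_cast at hk; nlinarith [hgmem.2]
  -- (a) : log (A/s) = log A - log s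
  have hfa : Complex.log (A / s) = Complex.log A - Complex.log (α ^ 2 - 1) * (1 / 2 : ℂ) := by
    rw [log_div' hA_ne hs_ne ⟨by linarith, by linarith⟩, hlogs]
  -- (d) : log (α/s) = log α - log s
  have hfd : Complex.log (α / s) = Complex.log α - Complex.log (α ^ 2 - 1) * (1 / 2 : ℂ) := by
    rw [log_div' hα hs_ne ⟨by linarith, by linarith⟩, hlogs]
  -- (b) : log ((α+1)/(α-1)) = log(α+1) - log(α-1)
  have hfb : Complex.log ((α + 1) / (α - 1)) = Complex.log (α + 1) - Complex.log (α - 1) :=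
    log_div' hp_ne hm_ne ⟨by linarith, by linarith⟩
  -- real-part facts
  have habs1m : ‖1 - α‖ = ‖α - 1‖ := norm_sub_rev 1 α
  have h1m_re : (Complex.log (1 - α)).re = (Complex.log (α - 1)).re := by
    rw [Complex.log_re, Complex.log_re, habs1m]
  have hU : (Complex.log (1 - α ^ 2)).re =
      (Complex.log (1 - α)).re + (Complex.log (1 + α)).re := by
    have hfac2 : 1 - α ^ 2 = (1 - α) * (1 + α) := by ring
    have h1p_ne : (1 : ℂ) + α ≠ 0 := by rwa [add_comm]
    rw [hfac2, Complex.log_re, Complex.log_re, Complex.log_re, norm_mul,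
      Real.log_mul (norm_ne_zero_iff.mpr h1m_ne) (norm_ne_zero_iff.mpr h1p_ne)]
  have hV : (Complex.log ((1 - α) / (1 + α))).re =
      (Complex.log (1 - α)).re - (Complex.log (1 + α)).re := by
    have h1p_ne : (1 : ℂ) + α ≠ 0 := by rwa [add_comm]
    rw [Complex.log_re, Complex.log_re, Complex.log_re, norm_div,
      Real.log_div (norm_ne_zero_iff.mpr h1m_ne) (norm_ne_zero_iff.mpr h1p_ne)]
  have hT : Real.log ‖((Real.cosh r : ℂ) - w α r) /
      ((Real.cosh r : ℂ) + w α r)‖ =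
      (Complex.log (((Real.cosh r : ℂ) - w α r) / ((Real.cosh r : ℂ) + w α r))).re :=
    (Complex.log_re _).symm
  -- assemble
  set T : ℂ := Complex.log (((Real.cosh r : ℂ) - w α r) / ((Real.cosh r : ℂ) + w α r))
  set U : ℂ := Complex.log (1 - α ^ 2)
  set V : ℂ := Complex.log ((1 - α) / (1 + α))
  set L : ℂ := Complex.log A
  set Lm : ℂ := Complex.log (α - 1)
  set Lp : ℂ := Complex.log (α + 1)
  set Lα : ℂ := Complex.log α
  rw [H, phi, pfun, qfun, ← hA_def, ← hs_def, hT, hfa, hfb, hfd, hff]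
  have hkey : 2 * (α * (L - (Lm + Lp) * (1 / 2 : ℂ)) + (1 / 2 : ℂ) * T) -
      ((α / 2) * (Lp - Lm) + (1 / 2 : ℂ) * U) -
      (α * (Lα - (Lm + Lp) * (1 / 2 : ℂ)) + (1 / 2 : ℂ) * V) + α * Lα - (α - 1) * Lm =
      (2 * α * L - α * (Lm + Lp)) + T + Lm - (1 / 2 : ℂ) * (U + V) := by
    ring
  rw [hkey]
  have hhalf : ((1 / 2 : ℂ) * (U + V)).re = (1 / 2) * (U.re + V.re) := by
    simp [Complex.mul_re, Complex.add_re]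
  simp only [Complex.add_re, Complex.sub_re, hhalf]
  rw [hU, hV, h1m_re]
  ring
end

section
/- Fix α ∈ ℂ with Re α > 0 and Im α > 0. Then the function r ↦ H(α,r) is strictly increasing on (0,∞). -/
private lemma alg_key (A W C S : ℂ) (hw2 : W ^ 2 = 1 + A ^ 2 * S ^ 2)
    (hc2 : C ^ 2 = 1 + S ^ 2) (hW : W ≠ 0) (hS : S ≠ 0) (hg : A * C + W ≠ 0)
    (hm : C - W ≠ 0) (hp : C + W ≠ 0) :
    2 * A * ((A * C + W)⁻¹ * (A * S + A ^ 2 * S * C / W)) +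
      ((C - W)⁻¹ * (S - A ^ 2 * S * C / W) - (C + W)⁻¹ * (S + A ^ 2 * S * C / W)) =
      2 * W / S := by
  have h1 : 2 * A * ((A * C + W)⁻¹ * (A * S + A ^ 2 * S * C / W)) = 2 * A ^ 2 * S / W := by
    field_simp
    ring
  have h2 : (C - W)⁻¹ * (S - A ^ 2 * S * C / W) = S * (W - A ^ 2 * C) / (W * (C - W)) := by
    field_simp
  have h3 : (C + W)⁻¹ * (S + A ^ 2 * S * C / W) = S * (W + A ^ 2 * C) / (W * (C + W)) := by
    field_simp
  have h4 : S * (W - A ^ 2 * C) / (W * (C - W)) - S * (W + A ^ 2 * C) / (W * (C + W)) =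
      2 / (S * W) := by
    rw [div_sub_div _ _ (mul_ne_zero hW hm) (mul_ne_zero hW hp),
      div_eq_div_iff (mul_ne_zero (mul_ne_zero hW hm) (mul_ne_zero hW hp)) (mul_ne_zero hS hW)]
    linear_combination (2*S^2*W^2 + 2*W^2) * hw2 + (-2*S^2*W^2*A^2 - 2*W^2) * hc2
  have h5 : 2 * A ^ 2 * S / W + 2 / (S * W) = 2 * W / S := by
    rw [div_add_div _ _ hW (mul_ne_zero hS hW),
      div_eq_div_iff (mul_ne_zero hW (mul_ne_zero hS hW)) hS]
    linear_combination (-2*S*W) * hw2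
  rw [h1, h2, h3, h4, h5]

/-- Basic facts about `w α r` for `r > 0`: its real and imaginary parts are positive,
its square is `1 + α² sinh² r`, and `1 + α² sinh² r` has positive imaginary part. -/
private lemma w_facts (α : ℂ) (hre : 0 < α.re) (him : 0 < α.im) {r : ℝ} (hr : 0 < r) :
    0 < (w α r).re ∧ 0 < (w α r).im ∧
      (w α r) ^ 2 = 1 + α ^ 2 * (Real.sinh r : ℂ) ^ 2 ∧
      0 < (1 + α ^ 2 * (Real.sinh r : ℂ) ^ 2).im := by
  have hs : 0 < Real.sinh r := Real.sinh_pos_iff.2 hr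
  set z : ℂ := 1 + α ^ 2 * (Real.sinh r : ℂ) ^ 2 with hzdef
  have hzim : 0 < z.im := by
    have hsq : ((Real.sinh r : ℂ)) ^ 2 = ((Real.sinh r ^ 2 : ℝ) : ℂ) := by push_cast; ring
    have ha2 : (α ^ 2).im = 2 * (α.re * α.im) := by rw [sq, Complex.mul_im]; ring
    have : z.im = Real.sinh r ^ 2 * (2 * (α.re * α.im)) := by
      rw [hzdef, hsq, mul_comm (α ^ 2), Complex.add_im, Complex.im_ofReal_mul, ha2]
      simp
    rw [this]
    have := mul_pos hre him
    positivity
  have hz0 : z ≠ 0 := by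
    intro h
    rw [h] at hzim
    simp at hzim
  have hargnn : 0 ≤ z.arg := Complex.arg_nonneg_iff.2 hzim.le
  have harg0 : z.arg ≠ 0 := by
    intro h
    rw [(Complex.arg_eq_zero_iff.1 h).2] at hzim
    exact lt_irrefl 0 hzim
  have harg1 : 0 < z.arg := lt_of_le_of_ne hargnn (Ne.symm harg0)
  have harg2 : z.arg < Real.pi := Complex.arg_lt_pi_iff.2 (Or.inr hzim.ne')
  have hwexp : w α r = Complex.exp (Complex.log z * (1 / 2)) := by
    rw [w, ← hzdef, Complex.cpow_def_of_ne_zero hz0]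
  have him' : (Complex.log z * (1 / 2)).im = z.arg / 2 := by
    simp [Complex.mul_im, Complex.log_im]
    ring
  have hcos : 0 < Real.cos ((Complex.log z * (1 / 2)).im) := by
    rw [him']
    apply Real.cos_pos_of_mem_Ioo
    constructor
    · linarith [Real.pi_pos]
    · linarith
  have hsin : 0 < Real.sin ((Complex.log z * (1 / 2)).im) := by
    rw [him']
    apply Real.sin_pos_of_pos_of_lt_pi
    · linarith
    · linarith [Real.pi_pos]
  refine ⟨?_, ?_, ?_, hzim⟩
  · rw [hwexp, Complex.exp_re]
    positivity
  · rw [hwexp, Complex.exp_im]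
    positivity
  · rw [hwexp, sq, ← Complex.exp_add]
    have : Complex.log z * (1 / 2) + Complex.log z * (1 / 2) = Complex.log z := by ring
    rw [this, Complex.exp_log hz0]

set_option maxHeartbeats 2000000 in
private lemma H_hasDerivAt (α : ℂ) (hre : 0 < α.re) (him : 0 < α.im) {r : ℝ} (hr : 0 < r) :
    HasDerivAt (H α) (2 * (w α r).re / Real.sinh r) r := by
  obtain ⟨hwre, hwim, hw2, hzim⟩ := w_facts α hre him hr
  have hs : 0 < Real.sinh r := Real.sinh_pos_iff.2 hr
  have hc : 0 < Real.cosh r := Real.cosh_pos r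
  set S : ℂ := (Real.sinh r : ℂ) with hSdef
  set C : ℂ := (Real.cosh r : ℂ) with hCdef
  set W : ℂ := w α r with hWdef
  have hW0 : W ≠ 0 := by
    intro h
    rw [h] at hwre
    simp at hwre
  have hS0 : S ≠ 0 := by
    rw [hSdef]
    exact_mod_cast hs.ne'
  have hc2 : C ^ 2 = 1 + S ^ 2 := by
    rw [hSdef, hCdef]
    norm_cast
    rw [Real.cosh_sq]
    ring
  have hgim : 0 < (α * C + W).im := by
    have : (α * C + W).im = α.im * Real.cosh r + W.im := by
      simp [hCdef, Complex.add_im, Complex.mul_im]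
    rw [this]
    positivity
  have hgslit : α * C + W ∈ Complex.slitPlane := Or.inr hgim.ne'
  have hg0 : α * C + W ≠ 0 := Complex.slitPlane_ne_zero hgslit
  have hmim : (C - W).im = -W.im := by simp [hCdef]
  have hpim : (C + W).im = W.im := by simp [hCdef]
  have hmslit : C - W ∈ Complex.slitPlane := Or.inr (by rw [hmim]; exact neg_ne_zero.2 hwim.ne')
  have hpslit : C + W ∈ Complex.slitPlane := Or.inr (by rw [hpim]; exact hwim.ne')
  have hm0 : C - W ≠ 0 := Complex.slitPlane_ne_zero hmslit
  have hp0 : C + W ≠ 0 := Complex.slitPlane_ne_zero hpslit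
  have hzslit : 1 + α ^ 2 * S ^ 2 ∈ Complex.slitPlane := Or.inr hzim.ne'
  -- derivatives
  have hSd : HasDerivAt (fun x : ℝ => (Real.sinh x : ℂ)) C r := by
    exact (Real.hasDerivAt_sinh r).ofReal_comp
  have hCd : HasDerivAt (fun x : ℝ => (Real.cosh x : ℂ)) S r := by
    exact (Real.hasDerivAt_cosh r).ofReal_comp
  have hsq : HasDerivAt (fun x : ℝ => (Real.sinh x : ℂ) ^ 2) (2 * S * C) r := by
    simp only [pow_two]
    convert hSd.mul hSd using 1
    · rfl
    · rfl
    · rw [hSdef]; ring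
  have hzd : HasDerivAt (fun x : ℝ => 1 + α ^ 2 * (Real.sinh x : ℂ) ^ 2)
      (α ^ 2 * (2 * S * C)) r := (hsq.const_mul (α ^ 2)).const_add 1
  have hwd : HasDerivAt (fun x : ℝ => w α x) (α ^ 2 * S * C / W) r := by
    have h := (Complex.hasStrictDerivAt_cpow_const (c := (1 / 2 : ℂ))
      hzslit).hasDerivAt.comp r hzd
    have heq : (fun x : ℝ => w α x) = (fun u : ℂ => u ^ (1 / 2 : ℂ)) ∘
        (fun x : ℝ => 1 + α ^ 2 * (Real.sinh x : ℂ) ^ 2) := rfl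
    rw [heq]
    convert h using 1
    · rfl
    rw [show ((1 / 2 : ℂ) - 1) = -(1 / 2) by norm_num, Complex.cpow_neg]
    have hinv : ((1 + α ^ 2 * S ^ 2) ^ (1 / 2 : ℂ))⁻¹ = W⁻¹ := by rw [hWdef, w]
    rw [hinv]
    field_simp
  have hgd : HasDerivAt (fun x : ℝ => α * (Real.cosh x : ℂ) + w α x)
      (α * S + α ^ 2 * S * C / W) r := (hCd.const_mul α).add hwd
  have hlog1 : HasDerivAt (fun x : ℝ => Complex.log (α * (Real.cosh x : ℂ) + w α x))
      ((α * C + W)⁻¹ * (α * S + α ^ 2 * S * C / W)) r :=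
    by have h := (Complex.hasDerivAt_log hgslit).comp r hgd; exact h
  have hlog2 : HasDerivAt (fun x : ℝ => Complex.log ((Real.cosh x : ℂ) - w α x))
      ((C - W)⁻¹ * (S - α ^ 2 * S * C / W)) r :=
    by have h := (Complex.hasDerivAt_log hmslit).comp r (hCd.sub hwd); exact h
  have hlog3 : HasDerivAt (fun x : ℝ => Complex.log ((Real.cosh x : ℂ) + w α x))
      ((C + W)⁻¹ * (S + α ^ 2 * S * C / W)) r :=
    by have h := (Complex.hasDerivAt_log hpslit).comp r (hCd.add hwd); exact h
  set F : ℝ → ℂ := fun x =>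
    2 * α * Complex.log (α * (Real.cosh x : ℂ) + w α x) - α * Complex.log (α ^ 2 - 1) +
      (Complex.log ((Real.cosh x : ℂ) - w α x) - Complex.log ((Real.cosh x : ℂ) + w α x))
    with hFdef
  have hFd : HasDerivAt F (2 * W / S) r := by
    have h := ((hlog1.const_mul (2 * α)).sub_const (α * Complex.log (α ^ 2 - 1))).add
      (hlog2.sub hlog3)
    have := alg_key α W C S hw2 hc2 hW0 hS0 hg0 hm0 hp0
    rw [← this]
    exact h
  have hRe : HasDerivAt (fun x => (F x).re) (2 * W.re / Real.sinh r) r := by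
    have h : HasDerivAt (fun x => (F x).re) ((2 * W / S).re) r :=
      Complex.reCLM.hasFDerivAt.comp_hasDerivAt r hFd
    have hval : (2 * W / S).re = 2 * W.re / Real.sinh r := by
      rw [hSdef, Complex.div_ofReal_re]
      rw [Complex.mul_re]
      norm_num
    rw [hval] at h
    exact h
  have hEq : H α =ᶠ[nhds r] fun x => (F x).re := by
    filter_upwards [isOpen_Ioi.mem_nhds (Set.mem_Ioi.2 hr)] with x hx
    obtain ⟨hwre', hwim', _, _⟩ := w_facts α hre him (Set.mem_Ioi.1 hx)
    have hm0' : (Real.cosh x : ℂ) - w α x ≠ 0 := by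
      intro h
      have h2 : ((Real.cosh x : ℂ) - w α x).im = 0 := by rw [h]; simp
      rw [Complex.sub_im, Complex.ofReal_im] at h2
      exact hwim'.ne' (by linarith)
    have hp0' : (Real.cosh x : ℂ) + w α x ≠ 0 := by
      intro h
      have h2 : ((Real.cosh x : ℂ) + w α x).im = 0 := by rw [h]; simp
      rw [Complex.add_im, Complex.ofReal_im] at h2
      exact hwim'.ne' (by linarith)
    have habsm : ‖(Real.cosh x : ℂ) - w α x‖ ≠ 0 := norm_ne_zero_iff.mpr hm0'
    have habsp : ‖(Real.cosh x : ℂ) + w α x‖ ≠ 0 := norm_ne_zero_iff.mpr hp0'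
    show H α x = (F x).re
    rw [H, hFdef]
    simp only [Complex.add_re, Complex.sub_re, map_div₀, norm_div, Complex.log_re]
    rw [Real.log_div habsm habsp]
  exact hRe.congr_of_eventuallyEq hEq

/-- For `Re α > 0`, `Im α > 0`, the function `r ↦ H(α,r)` is strictly increasing
on `(0,∞)`. -/
theorem H_strictMonoOn (α : ℂ) (hre : 0 < α.re) (him : 0 < α.im) :
    StrictMonoOn (fun r : ℝ => H α r) (Set.Ioi 0) := by
  apply strictMonoOn_of_deriv_pos (convex_Ioi 0)
  · intro x hx
    exact (H_hasDerivAt α hre him (Set.mem_Ioi.1 hx)).continuousAt.continuousWithinAt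
  · intro x hx
    rw [interior_Ioi] at hx
    have hx' := Set.mem_Ioi.1 hx
    have hd := H_hasDerivAt α hre him hx'
    have : deriv (fun r : ℝ => H α r) x = 2 * (w α x).re / Real.sinh x := hd.deriv
    rw [this]
    obtain ⟨hwre, _, _, _⟩ := w_facts α hre him hx'
    have hs : 0 < Real.sinh x := Real.sinh_pos_iff.2 hx'
    positivity
end

section
/- Fix r > 0. Then H(α,r) → 2·log(tanh(r/2)) as α → 0 with Re α ≥ 0, α ≠ 0. In particular this limit is strictly negative. -/
open Filter Complex Topology

lemma w_zero (r : ℝ) : w 0 r = 1 := by simp [w]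

lemma w_tendsto (r : ℝ) : Filter.Tendsto (fun α : ℂ => w α r) (nhds 0) (nhds 1) := by
  have h1 : ContinuousAt (fun α : ℂ => 1 + α ^ 2 * (Real.sinh r : ℂ) ^ 2) 0 := by fun_prop
  have h2 : ContinuousAt (fun z : ℂ => z ^ (1/2 : ℂ)) 1 := by
    apply continuousAt_cpow_const
    simp [Complex.mem_slitPlane_iff]
  have h3 : ContinuousAt (fun α : ℂ => w α r) 0 := by
    have := ContinuousAt.comp (x := (0:ℂ))
      (g := fun z : ℂ => z ^ (1/2 : ℂ)) (by simpa using h2) h1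
    simpa [w, Function.comp_def] using this
  simpa [w_zero r] using h3.tendsto

lemma abs_log_le' (z : ℂ) : ‖Complex.log z‖ ≤
    |Real.log ‖z‖| + Real.pi := by
  refine (Complex.norm_le_abs_re_add_abs_im _).trans ?_
  rw [Complex.log_re, Complex.log_im]
  exact add_le_add le_rfl (Complex.abs_arg_le_pi z)

/-- For fixed `r > 0`, `H(α,r) → 2 log(tanh(r/2))` as `α → 0` with `Re α ≥ 0`,
`α ≠ 0`; the limit is strictly negative. -/
theorem H_limit_at_zero (r : ℝ) (hr : 0 < r) :
    Filter.Tendsto (fun α : ℂ => H α r)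
        (nhdsWithin 0 {α : ℂ | 0 ≤ α.re ∧ α ≠ 0})
        (nhds (2 * Real.log (Real.tanh (r / 2)))) ∧
      2 * Real.log (Real.tanh (r / 2)) < 0 := by
  have hch1 : (1:ℝ) < Real.cosh r := Real.one_lt_cosh.mpr hr.ne'
  have hshp : 0 < Real.sinh (r/2) := Real.sinh_pos_iff.mpr (by linarith)
  have hchp : 0 < Real.cosh (r/2) := Real.cosh_pos _
  have htpos : 0 < Real.tanh (r/2) := by
    rw [Real.tanh_eq_sinh_div_cosh]; positivity
  have htlt : Real.tanh (r/2) < 1 := by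
    rw [Real.tanh_eq_sinh_div_cosh, div_lt_one hchp]
    exact Real.sinh_lt_cosh _
  -- key real identity
  have hkey : Real.log ((Real.cosh r - 1) / (Real.cosh r + 1))
      = 2 * Real.log (Real.tanh (r / 2)) := by
    have hct : Real.cosh r = Real.cosh (r/2) ^ 2 + Real.sinh (r/2) ^ 2 := by
      have := Real.cosh_two_mul (r/2)
      rw [show 2 * (r/2) = r by ring] at this
      linarith
    have hcs := Real.cosh_sq (r/2)
    have hn : Real.cosh r - 1 = 2 * Real.sinh (r/2) ^ 2 := by linarith
    have hd : Real.cosh r + 1 = 2 * Real.cosh (r/2) ^ 2 := by linarith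
    have hratio : (Real.cosh r - 1) / (Real.cosh r + 1) = Real.tanh (r/2) ^ 2 := by
      rw [Real.tanh_eq_sinh_div_cosh, div_pow, hn, hd,
        mul_div_mul_left _ _ (two_ne_zero)]
    rw [hratio, sq, Real.log_mul htpos.ne' htpos.ne', two_mul]
  refine ⟨?_, by nlinarith [Real.log_neg htpos htlt]⟩
  have hwt := w_tendsto r
  -- first piece : 2 α log(α cosh r + w α r) → 0
  have hA : Tendsto (fun α : ℂ => α * (Real.cosh r : ℂ) + w α r) (nhds 0) (nhds 1) := by
    have := (tendsto_id.mul_const ((Real.cosh r : ℂ))).add hwt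
    simpa using this
  have hlog : Tendsto (fun α : ℂ => Complex.log (α * (Real.cosh r : ℂ) + w α r))
      (nhds 0) (nhds 0) := by
    have := hA.clog (by simp [Complex.mem_slitPlane_iff])
    simpa using this
  have h1 : Tendsto (fun α : ℂ => 2 * α * Complex.log (α * (Real.cosh r : ℂ) + w α r))
      (nhds 0) (nhds 0) := by
    have := ((tendsto_id (x := nhds (0:ℂ))).const_mul 2).mul hlog
    simpa using this
  -- second piece : α log(α² − 1) → 0
  have h2 : Tendsto (fun α : ℂ => α * Complex.log (α ^ 2 - 1)) (nhds 0) (nhds 0) := by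
    have habs1 : Tendsto (fun α : ℂ => ‖α ^ 2 - 1‖) (nhds 0) (nhds 1) := by
      have hc : ContinuousAt (fun α : ℂ => ‖α ^ 2 - 1‖) 0 :=
        continuous_norm.continuousAt.comp (by fun_prop)
      simpa using hc.tendsto
    have hlog1 : Tendsto (fun α : ℂ => |Real.log ‖α ^ 2 - 1‖| + Real.pi)
        (nhds 0) (nhds Real.pi) := by
      have := ((Real.continuousAt_log one_ne_zero).tendsto.comp habs1).abs
      simpa using (this.add_const Real.pi)
    have hg : Tendsto (fun α : ℂ =>
        ‖α‖ * (|Real.log ‖α ^ 2 - 1‖| + Real.pi))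
        (nhds 0) (nhds 0) := by
      have habs0 : Tendsto (fun α : ℂ => ‖α‖) (nhds 0) (nhds 0) := by
        simpa using continuous_norm.tendsto (0:ℂ)
      simpa using habs0.mul hlog1
    refine squeeze_zero_norm (fun α => ?_) hg
    rw [norm_mul]
    exact mul_le_mul_of_nonneg_left (abs_log_le' _) (norm_nonneg _)
  -- real part piece
  have hRe : Tendsto (fun α : ℂ =>
      (2 * α * Complex.log (α * (Real.cosh r : ℂ) + w α r) -
        α * Complex.log (α ^ 2 - 1)).re) (nhds 0) (nhds 0) := by
    have hsub : Tendsto (fun α : ℂ =>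
        2 * α * Complex.log (α * (Real.cosh r : ℂ) + w α r) -
          α * Complex.log (α ^ 2 - 1)) (nhds 0) (nhds 0) := by
      simpa using h1.sub h2
    exact (Complex.continuous_re.tendsto 0).comp hsub
  -- log abs piece
  have hden : ((Real.cosh r : ℂ) + 1) ≠ 0 := by
    intro h
    have := congrArg Complex.re h
    simp at this
    linarith
  have hF : Tendsto (fun α : ℂ => ((Real.cosh r : ℂ) - w α r) / ((Real.cosh r : ℂ) + w α r))
      (nhds 0) (nhds (((Real.cosh r : ℂ) - 1) / ((Real.cosh r : ℂ) + 1))) :=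
    ((tendsto_const_nhds.sub hwt).div (tendsto_const_nhds.add hwt) hden)
  have habsL : ‖((Real.cosh r : ℂ) - 1) / ((Real.cosh r : ℂ) + 1)‖
      = (Real.cosh r - 1) / (Real.cosh r + 1) := by
    rw [norm_div]
    rw [show ((Real.cosh r : ℂ) - 1) = ((Real.cosh r - 1 : ℝ) : ℂ) by push_cast; ring,
      show ((Real.cosh r : ℂ) + 1) = ((Real.cosh r + 1 : ℝ) : ℂ) by push_cast; ring,
      Complex.norm_real, Complex.norm_real, Real.norm_eq_abs, Real.norm_eq_abs, abs_of_pos (by linarith), abs_of_pos (by linarith)]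
  have hLpos : (0:ℝ) < (Real.cosh r - 1) / (Real.cosh r + 1) := by
    apply div_pos <;> linarith
  have h3 : Tendsto (fun α : ℂ =>
      Real.log ‖((Real.cosh r : ℂ) - w α r) / ((Real.cosh r : ℂ) + w α r)‖)
      (nhds 0) (nhds (2 * Real.log (Real.tanh (r / 2)))) := by
    rw [← hkey, ← habsL]
    exact (Real.continuousAt_log (by rw [habsL]; exact hLpos.ne')).tendsto.comp
      ((continuous_norm.tendsto _).comp hF)
  have : Tendsto (fun α : ℂ => H α r) (nhds 0) (nhds (2 * Real.log (Real.tanh (r / 2)))) := by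
    have hsum := hRe.add h3
    rw [zero_add] at hsum
    exact hsum
  exact this.mono_left nhdsWithin_le_nhds
end
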